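/- Let M₁ be a real p×q matrix, M₂ a real p×r matrix, M₃ a real s×q matrix, and L ≥ 0. There exists a real s×r matrix W such that the (p+s)×(q+r) block matrix [[M₁, M₂],[M₃, W]] satisfies σ_max([[M₁, M₂],[M₃, W]]) ≤ L if and only if σ_max([M₁ M₂]) ≤ L and σ_max([M₁; M₃]) ≤ L, where [M₁ M₂] denotes the horizontal concatenation and [M₁; M₃] the vertical concatenation. Moreover, if p = s, q = r, M₁ is symmetric and M₂ = M₃ᵀ, then W can be chosen symmetric; and if M₁ is skew-symmetric and M₂ = −M₃ᵀ, then W can be chosen skew-symmetric. -/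

import Mathlib

open Matrix

set_option linter.unusedSectionVars false
set_option maxHeartbeats 1000000

noncomputable def Matrix.PosSemidef.sqrt {n : Type*} [Fintype n] [DecidableEq n]
    {A : Matrix n n ℝ} (hA : A.PosSemidef) : Matrix n n ℝ :=
  (hA.1.eigenvectorUnitary : Matrix n n ℝ) * diagonal ((↑) ∘ Real.sqrt ∘ hA.1.eigenvalues) *
    star (hA.1.eigenvectorUnitary : Matrix n n ℝ)

lemma Matrix.nbc_udu {n : Type*} [Fintype n] [DecidableEq n] (u : Matrix n n ℝ)
    (hu' : star u * u = 1) (g h : n → ℝ) :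
    u * diagonal g * star u * (u * diagonal h * star u)
      = u * diagonal (fun i => g i * h i) * star u := by
  rw [show u * diagonal g * star u * (u * diagonal h * star u)
      = u * diagonal g * (star u * u) * (diagonal h * star u) by simp only [Matrix.mul_assoc],
    hu', Matrix.mul_one, Matrix.mul_assoc, ← Matrix.mul_assoc (diagonal g),
    diagonal_mul_diagonal]
  simp only [Matrix.mul_assoc]

lemma Matrix.PosSemidef.posSemidef_sqrt {n : Type*} [Fintype n] [DecidableEq n]
    {A : Matrix n n ℝ} (hA : A.PosSemidef) : hA.sqrt.PosSemidef := by
  have h1 : (diagonal ((↑) ∘ Real.sqrt ∘ hA.1.eigenvalues : n → ℝ)).PosSemidef :=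
    posSemidef_diagonal_iff.mpr fun i => Real.sqrt_nonneg _
  have h2 := h1.mul_mul_conjTranspose_same (hA.1.eigenvectorUnitary : Matrix n n ℝ)
  rwa [← star_eq_conjTranspose] at h2

lemma Matrix.PosSemidef.sqrt_mul_self {n : Type*} [Fintype n] [DecidableEq n]
    {A : Matrix n n ℝ} (hA : A.PosSemidef) : hA.sqrt * hA.sqrt = A := by
  set u : Matrix n n ℝ := (hA.1.eigenvectorUnitary : Matrix n n ℝ) with hu0
  have hu' : star u * u = 1 := mem_unitaryGroup_iff'.mp hA.1.eigenvectorUnitary.2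
  have hspec : A = u * diagonal hA.1.eigenvalues * star u := by
    have := hA.1.spectral_theorem
    rwa [Unitary.conjStarAlgAut_apply, RCLike.ofReal_real_eq_id, Function.id_comp] at this
  have hf : (fun i => ((↑) ∘ Real.sqrt ∘ hA.1.eigenvalues : n → ℝ) i
      * ((↑) ∘ Real.sqrt ∘ hA.1.eigenvalues : n → ℝ) i) = hA.1.eigenvalues := by
    funext i
    exact Real.mul_self_sqrt (hA.eigenvalues_nonneg i)
  rw [Matrix.PosSemidef.sqrt, Matrix.nbc_udu u hu', hf]
  exact hspec.symm

lemma Matrix.PosSemidef.sq_sqrt {n : Type*} [Fintype n] [DecidableEq n]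
    {A : Matrix n n ℝ} (hA : A.PosSemidef) : hA.sqrt ^ 2 = A := by
  rw [sq, hA.sqrt_mul_self]

open Matrix Polynomial

namespace NBC

lemma ct_eq {m n : Type*} (A : Matrix m n ℝ) : Aᴴ = Aᵀ := by
  ext i j; simp [conjTranspose_apply]

section Basic
variable {m n : Type*} [Fintype m] [Fintype n] [DecidableEq m] [DecidableEq n]

lemma quad_eq (c : ℝ) (A : Matrix m n ℝ) (x : n → ℝ) :
    star x ⬝ᵥ ((c • (1 : Matrix n n ℝ) - Aᵀ * A) *ᵥ x) = c * (x ⬝ᵥ x) - (A *ᵥ x) ⬝ᵥ (A *ᵥ x) := by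
  simp only [sub_mulVec, dotProduct_sub, smul_mulVec, one_mulVec, dotProduct_smul,
    star_trivial, smul_eq_mul]
  rw [← mulVec_mulVec, dotProduct_mulVec x Aᵀ, vecMul_transpose]

lemma bnd_iff (c : ℝ) (A : Matrix m n ℝ) :
    (c • (1 : Matrix n n ℝ) - Aᵀ * A).PosSemidef ↔
      ∀ x : n → ℝ, (A *ᵥ x) ⬝ᵥ (A *ᵥ x) ≤ c * (x ⬝ᵥ x) := by
  constructor
  · intro h x
    have := h.dotProduct_mulVec_nonneg x
    rw [quad_eq] at this; linarith
  · intro h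
    refine .of_dotProduct_mulVec_nonneg ?_ fun x => ?_
    · rw [IsHermitian, ct_eq]
      simp [transpose_sub, transpose_smul, transpose_mul, transpose_transpose]
    · rw [quad_eq]; have := h x; linarith

lemma dp_self_nonneg (x : n → ℝ) : 0 ≤ x ⬝ᵥ x :=
  Finset.sum_nonneg fun _ _ => mul_self_nonneg _

lemma dp_cs (x y : n → ℝ) : (x ⬝ᵥ y) ^ 2 ≤ (x ⬝ᵥ x) * (y ⬝ᵥ y) := by
  have := Finset.sum_mul_sq_le_sq_mul_sq Finset.univ x y
  simpa [dotProduct, sq] using this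

lemma transfer {c : ℝ} (hc : 0 ≤ c) {A : Matrix m n ℝ}
    (h : (c • (1 : Matrix n n ℝ) - Aᵀ * A).PosSemidef) :
    (c • (1 : Matrix m m ℝ) - A * Aᵀ).PosSemidef := by
  rw [bnd_iff] at h
  have : (c • (1 : Matrix m m ℝ) - (Aᵀ)ᵀ * Aᵀ).PosSemidef := by
    rw [bnd_iff]
    intro y
    set v : n → ℝ := Aᵀ *ᵥ y with hv
    have h1 : v ⬝ᵥ v = y ⬝ᵥ (A *ᵥ v) := by
      rw [hv]; nth_rewrite 1 [mulVec_transpose]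
      rw [← dotProduct_mulVec]
    have h2 := dp_cs y (A *ᵥ v)
    have h3 := h v
    have h4 := dp_self_nonneg y
    have h5 := dp_self_nonneg v
    have h6 := dp_self_nonneg (A *ᵥ v)
    rcases eq_or_lt_of_le h5 with h7 | h7
    · rw [← h7]; positivity
    · nlinarith [h1, h2, h3]
  rwa [transpose_transpose] at this

lemma psd_smul {c : ℝ} (hc : 0 ≤ c) {A : Matrix n n ℝ} (h : A.PosSemidef) :
    (c • A).PosSemidef := by
  refine .of_dotProduct_mulVec_nonneg ?_ fun x => ?_
  · have h1 := h.1
    rw [IsHermitian] at h1 ⊢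
    rw [conjTranspose_smul, h1]
    congr 1
  · rw [smul_mulVec, dotProduct_smul]
    exact smul_nonneg hc (h.dotProduct_mulVec_nonneg x)

lemma psd_t_mul (A : Matrix m n ℝ) : (Aᵀ * A).PosSemidef := by
  rw [← ct_eq]; exact posSemidef_conjTranspose_mul_self A

lemma psd_mul_t (A : Matrix m n ℝ) : (A * Aᵀ).PosSemidef := by
  rw [← ct_eq]; exact posSemidef_self_mul_conjTranspose A

lemma psd_sub_add {E X Y : Matrix n n ℝ} (h : (E - (X + Y)).PosSemidef)
    (hY : Y.PosSemidef) : (E - X).PosSemidef := by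
  have h2 : E - X = (E - (X + Y)) + Y := by abel
  rw [h2]; exact h.add hY

lemma psd_fromBlocks_zero {M : Matrix m m ℝ} (hM : M.PosSemidef) :
    (fromBlocks (0 : Matrix n n ℝ) 0 0 M).PosSemidef := by
  have hsqt : hM.sqrtᵀ = hM.sqrt := by rw [← ct_eq]; exact hM.posSemidef_sqrt.1
  have h : fromBlocks (0 : Matrix n n ℝ) 0 0 M
      = (fromBlocks (0 : Matrix n n ℝ) 0 0 hM.sqrt)ᴴ * (fromBlocks 0 0 0 hM.sqrt) := by
    rw [ct_eq, fromBlocks_transpose, fromBlocks_multiply]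
    simp [hsqt, hM.sqrt_mul_self]
  rw [h]
  exact posSemidef_conjTranspose_mul_self _

lemma dp_self_eq_zero {x : n → ℝ} (h : x ⬝ᵥ x = 0) : x = 0 := by
  funext i
  have h2 : ∀ j ∈ Finset.univ, 0 ≤ x j * x j := fun j _ => mul_self_nonneg _
  have := (Finset.sum_eq_zero_iff_of_nonneg h2).mp h i (Finset.mem_univ i)
  simpa [mul_self_eq_zero] using this

lemma dp_mulVec_self (N : Matrix m n ℝ) (x : n → ℝ) :
    x ⬝ᵥ ((Nᵀ * N) *ᵥ x) = (N *ᵥ x) ⬝ᵥ (N *ᵥ x) := by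
  rw [← mulVec_mulVec, dotProduct_mulVec x Nᵀ, vecMul_transpose]

/-- conjugation by a unitary as an algebra hom -/
noncomputable def conjAH (u : Matrix n n ℝ) (hu : u * star u = 1) (hu' : star u * u = 1) :
    Matrix n n ℝ →ₐ[ℝ] Matrix n n ℝ where
  toFun X := u * X * star u
  map_one' := by show u * 1 * star u = 1; rw [mul_one, hu]
  map_mul' X Y := by
    show u * (X * Y) * star u = (u * X * star u) * (u * Y * star u)
    rw [show (u * X * star u) * (u * Y * star u) = u * X * (star u * u) * (Y * star u) by
      simp only [mul_assoc], hu', mul_one]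
    simp only [mul_assoc]
  map_zero' := by show u * 0 * star u = 0; simp
  map_add' X Y := by show u * (X + Y) * star u = _; noncomm_ring
  commutes' c := by
    show u * _ * star u = _
    simp only [Algebra.algebraMap_eq_smul_one]
    rw [mul_smul_comm, mul_one, smul_mul_assoc, hu]

lemma aeval_conj (u : Matrix n n ℝ) (hu : u * star u = 1) (hu' : star u * u = 1)
    (D : Matrix n n ℝ) (π : ℝ[X]) :
    aeval (u * D * star u) π = u * aeval D π * star u := by
  have := Polynomial.aeval_algHom_apply (conjAH u hu hu') D π
  simpa [conjAH] using this

lemma aeval_diag (d : n → ℝ) (π : ℝ[X]) :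
    aeval (diagonal d) π = diagonal (fun i => π.eval (d i)) := by
  have h1 : diagonal d = diagonalAlgHom ℝ d := rfl
  rw [h1, Polynomial.aeval_algHom_apply]
  show diagonal _ = _
  suffices h : (aeval d π : n → ℝ) = fun i => π.eval (d i) by rw [h]
  funext i
  rw [show (aeval d π : n → ℝ) i = Pi.evalAlgHom ℝ (fun _ => ℝ) i (aeval d π) from rfl,
    ← Polynomial.aeval_algHom_apply (Pi.evalAlgHom ℝ (fun _ => ℝ) i) d π]
  simp [Pi.evalAlgHom, ← Polynomial.coe_aeval_eq_eval]
  rfl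

lemma poly_eq_sqrt {K : Matrix n n ℝ} (hK : K.PosSemidef) (π : ℝ[X])
    (hπ : ∀ i, π.eval (hK.1.eigenvalues i) = Real.sqrt (hK.1.eigenvalues i)) :
    aeval K π = hK.sqrt := by
  set u : Matrix n n ℝ := (hK.1.eigenvectorUnitary : Matrix n n ℝ) with hu0
  have hu : u * star u = 1 := mem_unitaryGroup_iff.mp hK.1.eigenvectorUnitary.2
  have hu' : star u * u = 1 := mem_unitaryGroup_iff'.mp hK.1.eigenvectorUnitary.2
  have h1 : aeval K π = u * aeval (diagonal hK.1.eigenvalues) π * star u := by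
    conv_lhs => rw [show K = u * diagonal hK.1.eigenvalues * star u by
      have := hK.1.spectral_theorem
      rwa [Unitary.conjStarAlgAut_apply, RCLike.ofReal_real_eq_id, Function.id_comp] at this]
    exact aeval_conj u hu hu' _ π
  have h2 : (fun i => π.eval (hK.1.eigenvalues i))
      = ((↑) ∘ Real.sqrt ∘ hK.1.eigenvalues : n → ℝ) := by
    funext i
    simpa using hπ i
  rw [h1, aeval_diag, h2]
  rfl

lemma interp_exists (t : Finset ℝ) (f : ℝ → ℝ) : ∃ π : ℝ[X], ∀ x ∈ t, π.eval x = f x := by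
  refine ⟨Lagrange.interpolate t id f, fun x hx => ?_⟩
  have := Lagrange.eval_interpolate_at_node (v := id) (r := f) (Set.injOn_id _) hx
  simpa using this

lemma intertwine_pow {K₁ : Matrix m m ℝ} {K₂ : Matrix n n ℝ} {X : Matrix m n ℝ}
    (h : X * K₂ = K₁ * X) (k : ℕ) : X * K₂ ^ k = K₁ ^ k * X := by
  induction k with
  | zero => simp
  | succ k ih =>
    rw [pow_succ, pow_succ, ← Matrix.mul_assoc, ih, Matrix.mul_assoc, h, ← Matrix.mul_assoc]

lemma intertwine_poly {K₁ : Matrix m m ℝ} {K₂ : Matrix n n ℝ} {X : Matrix m n ℝ}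
    (h : X * K₂ = K₁ * X) (π : ℝ[X]) : X * aeval K₂ π = aeval K₁ π * X := by
  rw [Polynomial.aeval_eq_sum_range (x := K₂), Polynomial.aeval_eq_sum_range (x := K₁),
    Matrix.mul_sum, Matrix.sum_mul]
  refine Finset.sum_congr rfl fun k _ => ?_
  rw [Matrix.mul_smul, Matrix.smul_mul, intertwine_pow h]

lemma intertwine_sqrt {K₁ : Matrix m m ℝ} {K₂ : Matrix n n ℝ} (hK₁ : K₁.PosSemidef)
    (hK₂ : K₂.PosSemidef) (X : Matrix m n ℝ) (h : X * K₂ = K₁ * X) :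
    X * hK₂.sqrt = hK₁.sqrt * X := by
  obtain ⟨π, hπ⟩ := interp_exists
    ((Finset.univ.image hK₁.1.eigenvalues) ∪ (Finset.univ.image hK₂.1.eigenvalues)) Real.sqrt
  rw [← poly_eq_sqrt hK₁ π (fun i => hπ _ (Finset.mem_union_left _
        (Finset.mem_image_of_mem _ (Finset.mem_univ i)))),
      ← poly_eq_sqrt hK₂ π (fun i => hπ _ (Finset.mem_union_right _
        (Finset.mem_image_of_mem _ (Finset.mem_univ i)))),
      intertwine_poly h]

theorem _root_.Matrix.PosSemidef.eq_sqrt_of_sq_eq {A B : Matrix n n ℝ} (hB : B.PosSemidef)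
    (hA : A.PosSemidef) (h : B ^ 2 = A) : B = hA.sqrt := by
  obtain ⟨π, hπ⟩ := interp_exists ((Finset.univ.image hA.1.eigenvalues) ∪
    (Finset.univ.image (fun i => hB.1.eigenvalues i ^ 2))) Real.sqrt
  rw [← poly_eq_sqrt hA π (fun i => hπ _ (Finset.mem_union_left _
    (Finset.mem_image_of_mem _ (Finset.mem_univ i))))]
  set u : Matrix n n ℝ := (hB.1.eigenvectorUnitary : Matrix n n ℝ) with hu0
  have hu : u * star u = 1 := mem_unitaryGroup_iff.mp hB.1.eigenvectorUnitary.2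
  have hu' : star u * u = 1 := mem_unitaryGroup_iff'.mp hB.1.eigenvectorUnitary.2
  have hspec : B = u * diagonal hB.1.eigenvalues * star u := by
    have := hB.1.spectral_theorem
    rwa [Unitary.conjStarAlgAut_apply, RCLike.ofReal_real_eq_id, Function.id_comp] at this
  have hB2 : A = u * diagonal (fun i => hB.1.eigenvalues i ^ 2) * star u := by
    rw [← h, sq]
    conv_lhs => rw [hspec]
    rw [Matrix.nbc_udu u hu']
    simp only [sq]
  have hfe : (fun i => π.eval (hB.1.eigenvalues i ^ 2)) = hB.1.eigenvalues := by
    funext i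
    rw [hπ (hB.1.eigenvalues i ^ 2) (Finset.mem_union_right _
      (Finset.mem_image_of_mem (fun i => hB.1.eigenvalues i ^ 2) (Finset.mem_univ i))),
      Real.sqrt_sq (hB.eigenvalues_nonneg i)]
  rw [hB2, aeval_conj u hu hu', aeval_diag, hfe]
  exact hspec

end Basic

section D
variable {m n : Type*} [Fintype m] [Fintype n] [DecidableEq m] [DecidableEq n]

lemma douglas {K : Matrix n n ℝ} (hK : K.PosSemidef) (C : Matrix m n ℝ)
    (hC : (K - Cᵀ * C).PosSemidef) :
    ∃ Z : Matrix m n ℝ, C = Z * hK.sqrt ∧ ((1 : Matrix n n ℝ) - Zᵀ * Z).PosSemidef := by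
  classical
  set u : Matrix n n ℝ := (hK.1.eigenvectorUnitary : Matrix n n ℝ) with hu0
  have hu : u * star u = 1 := mem_unitaryGroup_iff.mp hK.1.eigenvectorUnitary.2
  have hu' : star u * u = 1 := mem_unitaryGroup_iff'.mp hK.1.eigenvectorUnitary.2
  set d : n → ℝ := hK.1.eigenvalues with hd0
  set F : (n → ℝ) → Matrix n n ℝ := fun g => u * diagonal g * star u with hF0
  have Fmul : ∀ g h : n → ℝ, F g * F h = F (fun i => g i * h i) := by
    intro g h
    show u * diagonal g * star u * (u * diagonal h * star u) = u * diagonal _ * star u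
    rw [show u * diagonal g * star u * (u * diagonal h * star u)
        = u * diagonal g * (star u * u) * (diagonal h * star u) by simp only [Matrix.mul_assoc],
      hu', Matrix.mul_one, Matrix.mul_assoc, ← Matrix.mul_assoc (diagonal g),
      diagonal_mul_diagonal]
    simp only [Matrix.mul_assoc]
  have Fct : ∀ g : n → ℝ, (F g)ᴴ = F g := by
    intro g
    show (u * diagonal g * star u)ᴴ = _
    rw [conjTranspose_mul, conjTranspose_mul, ← star_eq_conjTranspose u,
      ← star_eq_conjTranspose (star u), star_star]
    rw [show (diagonal g)ᴴ = diagonal g by rw [ct_eq, diagonal_transpose]]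
    rw [← Matrix.mul_assoc]
  have Ft : ∀ g : n → ℝ, (F g)ᵀ = F g := fun g => by rw [← ct_eq]; exact Fct g
  have Fpsd : ∀ g : n → ℝ, (∀ i, 0 ≤ g i) → (F g).PosSemidef := by
    intro g hg
    have : (diagonal g).PosSemidef := posSemidef_diagonal_iff.mpr hg
    have h2 := this.mul_mul_conjTranspose_same u
    rwa [← star_eq_conjTranspose u] at h2
  have Fone : F (fun _ => 1) = 1 := by
    show u * diagonal _ * star u = 1
    rw [show (diagonal fun _ => (1:ℝ)) = 1 from diagonal_one, Matrix.mul_one, hu]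
  have Fzero : F (fun _ => 0) = 0 := by
    show u * diagonal _ * star u = 0
    rw [show (diagonal fun _ => (0:ℝ)) = 0 from diagonal_zero, Matrix.mul_zero, Matrix.zero_mul]
  have hdnn : ∀ i, 0 ≤ d i := fun i => hK.eigenvalues_nonneg i
  have hKF : K = F d := by
    have := hK.1.spectral_theorem
    rwa [Unitary.conjStarAlgAut_apply, RCLike.ofReal_real_eq_id, Function.id_comp] at this
  have hsq : hK.sqrt = F (fun i => Real.sqrt (d i)) := by
    show _ = u * diagonal _ * star u
    rw [Matrix.PosSemidef.sqrt]
    congr 1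
  set g : n → ℝ := fun i => if d i = 0 then 0 else (Real.sqrt (d i))⁻¹ with hg0
  set e : n → ℝ := fun i => if d i = 0 then 0 else 1 with he0
  set Z : Matrix m n ℝ := C * F g with hZ0
  have hge : (fun i => g i * Real.sqrt (d i)) = e := by
    funext i
    by_cases h : d i = 0
    · simp [hg0, he0, h]
    · have h1 : 0 < d i := lt_of_le_of_ne (hdnn i) (Ne.symm h)
      have h2 : Real.sqrt (d i) ≠ 0 := by positivity
      simp only [hg0, he0, if_neg h]
      exact inv_mul_cancel₀ h2
  have hgdg : (fun i => (g i * d i) * g i) = e := by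
    funext i
    by_cases h : d i = 0
    · simp [hg0, he0, h]
    · have h1 : 0 < d i := lt_of_le_of_ne (hdnn i) (Ne.symm h)
      have h2 : Real.sqrt (d i) ≠ 0 := by positivity
      have hss : Real.sqrt (d i) * Real.sqrt (d i) = d i := Real.mul_self_sqrt h1.le
      simp only [hg0, he0, if_neg h]
      field_simp
      rw [Real.sq_sqrt h1.le]
  have hee : (fun i => (1 - e i) * d i * (1 - e i)) = (fun _ => (0:ℝ)) := by
    funext i
    by_cases h : d i = 0
    · simp [he0, h]
    · simp [he0, h]
  have h1P : (1 : Matrix n n ℝ) - F e = F (fun i => 1 - e i) := by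
    show _ = u * diagonal _ * star u
    rw [show (diagonal fun i => 1 - e i) = 1 - diagonal e by
      rw [← diagonal_one, ← diagonal_sub]]
    rw [Matrix.mul_sub, Matrix.sub_mul, Matrix.mul_one, hu]
  -- Z * sqrt = C * F e
  have hZS : Z * hK.sqrt = C * F e := by
    rw [hZ0, hsq, Matrix.mul_assoc, Fmul, hge]
  -- (1-P) K (1-P) = 0
  have hPKP : ((1 : Matrix n n ℝ) - F e) * K * ((1 : Matrix n n ℝ) - F e) = 0 := by
    rw [h1P, hKF]
    simp only [Fmul]
    rw [hee, Fzero]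
  have h1Pct : ((1 : Matrix n n ℝ) - F e)ᴴ = (1 : Matrix n n ℝ) - F e := by
    rw [h1P, Fct]
  -- C * (1 - F e) = 0
  have hNzero : C * ((1 : Matrix n n ℝ) - F e) = 0 := by
    set N : Matrix m n ℝ := C * ((1 : Matrix n n ℝ) - F e) with hN0
    have hQ := hC.conjTranspose_mul_mul_same ((1 : Matrix n n ℝ) - F e)
    have h1Pt : ((1 : Matrix n n ℝ) - F e)ᵀ = 1 - F e := by rw [← ct_eq, h1Pct]
    have expand : ((1 : Matrix n n ℝ) - F e) * (K - Cᵀ * C) * ((1 : Matrix n n ℝ) - F e)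
        = ((1 : Matrix n n ℝ) - F e) * K * ((1 : Matrix n n ℝ) - F e)
          - ((1 : Matrix n n ℝ) - F e) * Cᵀ * (C * ((1 : Matrix n n ℝ) - F e)) := by
      rw [Matrix.mul_sub ((1 : Matrix n n ℝ) - F e) K (Cᵀ * C),
        Matrix.sub_mul (((1 : Matrix n n ℝ) - F e) * K)
          (((1 : Matrix n n ℝ) - F e) * (Cᵀ * C)) ((1 : Matrix n n ℝ) - F e)]
      congr 1
      simp only [Matrix.mul_assoc]
    have hconj : ((1 : Matrix n n ℝ) - F e)ᴴ * (K - Cᵀ * C) * ((1 : Matrix n n ℝ) - F e)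
        = 0 - Nᵀ * N := by
      rw [h1Pct, expand, hPKP, hN0, transpose_mul, h1Pt]
    rw [hconj] at hQ
    have hall : ∀ x : n → ℝ, N *ᵥ x = 0 := by
      intro x
      have hx := hQ.dotProduct_mulVec_nonneg x
      rw [star_trivial, sub_mulVec, zero_mulVec, zero_sub, dotProduct_neg, dp_mulVec_self] at hx
      have h2 : (N *ᵥ x) ⬝ᵥ (N *ᵥ x) = 0 := le_antisymm (by linarith)
        (Finset.sum_nonneg fun _ _ => mul_self_nonneg _)
      exact dp_self_eq_zero h2
    ext i j
    have h5 := congrFun (hall (Pi.single j 1)) i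
    rw [mulVec_single] at h5
    simpa using h5
  have hCP : C = Z * hK.sqrt := by
    rw [hZS]
    have h3 := hNzero
    rw [Matrix.mul_sub, Matrix.mul_one, sub_eq_zero] at h3
    exact h3
  refine ⟨Z, hCP, ?_⟩
  -- 1 - ZᵀZ psd
  have hZZ : Zᵀ * Z = F g * (Cᵀ * C) * F g := by
    rw [hZ0, transpose_mul, Ft]
    simp only [Matrix.mul_assoc]
  have hFgK : F g * K * F g = F e := by
    rw [hKF]
    simp only [Fmul]
    rw [hgdg]
  have hsplit : (1 : Matrix n n ℝ) - Zᵀ * Z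
      = F g * (K - Cᵀ * C) * F g + ((1 : Matrix n n ℝ) - F e) := by
    have expand2 : F g * (K - Cᵀ * C) * F g = F g * K * F g - F g * (Cᵀ * C) * F g := by
      rw [Matrix.mul_sub (F g) K (Cᵀ * C), Matrix.sub_mul (F g * K) (F g * (Cᵀ * C)) (F g)]
    rw [hZZ, expand2, hFgK]
    abel
  rw [hsplit]
  have hp1 : (F g * (K - Cᵀ * C) * F g).PosSemidef := by
    have h4 := hC.conjTranspose_mul_mul_same (F g)
    rwa [Fct] at h4
  have hp2 : ((1 : Matrix n n ℝ) - F e).PosSemidef := by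
    rw [h1P]
    refine Fpsd _ fun i => ?_
    by_cases h : d i = 0 <;> simp [he0, h]
  exact hp1.add hp2

end D

section Key
variable {p q r s : Type*} [Fintype p] [Fintype q] [Fintype r] [Fintype s]
  [DecidableEq p] [DecidableEq q] [DecidableEq r] [DecidableEq s]

lemma key (L : ℝ) (hL : 0 ≤ L) (M₁ : Matrix p q ℝ) (Z : Matrix s q ℝ) (Y : Matrix p r ℝ)
    (hS : (L ^ 2 • (1 : Matrix q q ℝ) - M₁ᵀ * M₁).PosSemidef)
    (hT : (L ^ 2 • (1 : Matrix p p ℝ) - M₁ * M₁ᵀ).PosSemidef)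
    (hZ : ((1 : Matrix q q ℝ) - Zᵀ * Z).PosSemidef)
    (hY : ((1 : Matrix r r ℝ) - Yᵀ * Y).PosSemidef) :
    (L ^ 2 • (1 : Matrix (q ⊕ r) (q ⊕ r) ℝ) -
      (fromBlocks M₁ (hT.sqrt * Y) (Z * hS.sqrt) (-(Z * (M₁ᵀ * Y))))ᵀ *
      fromBlocks M₁ (hT.sqrt * Y) (Z * hS.sqrt) (-(Z * (M₁ᵀ * Y)))).PosSemidef := by
  set S : Matrix q q ℝ := hS.sqrt with hS0
  set T : Matrix p p ℝ := hT.sqrt with hT0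
  have hSt : Sᵀ = S := by rw [← ct_eq]; exact hS.posSemidef_sqrt.1
  have hTt : Tᵀ = T := by rw [← ct_eq]; exact hT.posSemidef_sqrt.1
  have hcomm : M₁ᵀ * (L ^ 2 • (1 : Matrix p p ℝ) - M₁ * M₁ᵀ)
      = (L ^ 2 • (1 : Matrix q q ℝ) - M₁ᵀ * M₁) * M₁ᵀ := by
    rw [Matrix.mul_sub, Matrix.sub_mul, Matrix.mul_smul, Matrix.smul_mul,
      Matrix.mul_one, Matrix.one_mul, ← Matrix.mul_assoc]
  have hint : M₁ᵀ * T = S * M₁ᵀ := intertwine_sqrt hS hT M₁ᵀ hcomm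
  have hintT : T * M₁ = M₁ * S := by
    have h2 := congrArg Matrix.transpose hint
    rwa [transpose_mul, transpose_mul, transpose_transpose, hSt, hTt] at h2
  set U : Matrix (p ⊕ q) (q ⊕ p) ℝ := fromBlocks M₁ T S (-M₁ᵀ) with hU0
  have hUtU : Uᵀ * U = L ^ 2 • (1 : Matrix (q ⊕ p) (q ⊕ p) ℝ) := by
    rw [hU0, fromBlocks_transpose, fromBlocks_multiply]
    rw [show M₁ᵀ * M₁ + Sᵀ * S = L ^ 2 • (1 : Matrix q q ℝ) by
        rw [hSt, hS0, hS.sqrt_mul_self]; abel]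
    rw [show M₁ᵀ * T + Sᵀ * (-M₁ᵀ) = 0 by
        rw [hSt, Matrix.mul_neg, hint]; abel]
    rw [show Tᵀ * M₁ + (-M₁ᵀ)ᵀ * S = 0 by
        rw [hTt, transpose_neg, transpose_transpose, Matrix.neg_mul, hintT]; abel]
    rw [show Tᵀ * T + (-M₁ᵀ)ᵀ * (-M₁ᵀ) = L ^ 2 • (1 : Matrix p p ℝ) by
        rw [hTt, transpose_neg, transpose_transpose, Matrix.neg_mul, Matrix.mul_neg,
          neg_neg, hT0, hT.sqrt_mul_self]; abel]
    rw [show (0 : Matrix q p ℝ) = L ^ 2 • (0 : Matrix q p ℝ) by simp,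
      show (0 : Matrix p q ℝ) = L ^ 2 • (0 : Matrix p q ℝ) by simp,
      ← fromBlocks_smul, fromBlocks_one]
  set DZ : Matrix (p ⊕ s) (p ⊕ q) ℝ := fromBlocks 1 0 0 Z with hDZ0
  set DY : Matrix (q ⊕ p) (q ⊕ r) ℝ := fromBlocks 1 0 0 Y with hDY0
  have hfact : fromBlocks M₁ (T * Y) (Z * S) (-(Z * (M₁ᵀ * Y))) = DZ * U * DY := by
    rw [hDZ0, hU0, hDY0, fromBlocks_multiply, fromBlocks_multiply]
    congr 1 <;> simp [Matrix.mul_assoc]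
  have hDZt : DZᵀ * DZ = fromBlocks 1 0 0 (Zᵀ * Z) := by
    rw [hDZ0, fromBlocks_transpose, fromBlocks_multiply]
    simp
  have hDYt : DYᵀ * DY = fromBlocks 1 0 0 (Yᵀ * Y) := by
    rw [hDY0, fromBlocks_transpose, fromBlocks_multiply]
    simp
  have hZblk : (1 : Matrix (p ⊕ q) (p ⊕ q) ℝ) - DZᵀ * DZ
      = fromBlocks 0 0 0 ((1 : Matrix q q ℝ) - Zᵀ * Z) := by
    rw [hDZt, ← fromBlocks_one, sub_eq_add_neg, fromBlocks_neg, fromBlocks_add]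
    simp [sub_eq_add_neg]
  have hYblk : (1 : Matrix (q ⊕ r) (q ⊕ r) ℝ) - DYᵀ * DY
      = fromBlocks 0 0 0 ((1 : Matrix r r ℝ) - Yᵀ * Y) := by
    rw [hDYt, ← fromBlocks_one, sub_eq_add_neg, fromBlocks_neg, fromBlocks_add]
    simp [sub_eq_add_neg]
  rw [hfact]
  have main : L ^ 2 • (1 : Matrix (q ⊕ r) (q ⊕ r) ℝ) - (DZ * U * DY)ᵀ * (DZ * U * DY)
      = L ^ 2 • ((1 : Matrix (q ⊕ r) (q ⊕ r) ℝ) - DYᵀ * DY)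
        + (U * DY)ᵀ * (((1 : Matrix (p ⊕ q) (p ⊕ q) ℝ) - DZᵀ * DZ) * (U * DY)) := by
    have e1 : ((1 : Matrix (p ⊕ q) (p ⊕ q) ℝ) - DZᵀ * DZ) * (U * DY)
        = U * DY - DZᵀ * (DZ * (U * DY)) := by
      rw [Matrix.sub_mul (1 : Matrix (p ⊕ q) (p ⊕ q) ℝ) (DZᵀ * DZ) (U * DY), Matrix.one_mul]
      simp only [Matrix.mul_assoc]
    have e2 : (U * DY)ᵀ * (U * DY - DZᵀ * (DZ * (U * DY)))
        = (U * DY)ᵀ * (U * DY) - (U * DY)ᵀ * (DZᵀ * (DZ * (U * DY))) :=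
      Matrix.mul_sub _ _ _
    have e3 : (U * DY)ᵀ * (U * DY) = L ^ 2 • (DYᵀ * DY) := by
      rw [transpose_mul, Matrix.mul_assoc DYᵀ Uᵀ (U * DY), ← Matrix.mul_assoc Uᵀ U DY,
        hUtU, Matrix.smul_mul, Matrix.one_mul, Matrix.mul_smul]
    have e4 : (U * DY)ᵀ * (DZᵀ * (DZ * (U * DY))) = (DZ * U * DY)ᵀ * (DZ * U * DY) := by
      simp only [transpose_mul, Matrix.mul_assoc]
    rw [smul_sub, e1, e2, e3, e4]
    abel
  rw [main]
  have hL2 : 0 ≤ L ^ 2 := sq_nonneg L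
  have psd1 : ((1 : Matrix (q ⊕ r) (q ⊕ r) ℝ) - DYᵀ * DY).PosSemidef := by
    rw [hYblk]; exact psd_fromBlocks_zero hY
  have psdX : ((1 : Matrix (p ⊕ q) (p ⊕ q) ℝ) - DZᵀ * DZ).PosSemidef := by
    rw [hZblk]; exact psd_fromBlocks_zero hZ
  have psd2 := psdX.conjTranspose_mul_mul_same (U * DY)
  rw [ct_eq, Matrix.mul_assoc] at psd2
  exact (psd_smul hL2 psd1).add psd2

end Key

end NBC

open NBC

/-- Norm-bounded matrix completion (Theorem 3.10, Davis–Kahan–Weinberger): a block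
matrix `[[M₁, M₂],[M₃, W]]` with `σ_max ≤ L` (encoded as `AᵀA ⪯ L²·I`) exists if and
only if `σ_max([M₁ M₂]) ≤ L` and `σ_max([M₁; M₃]) ≤ L`. Moreover, in the square case,
if `M₁` is symmetric and `M₂ = M₃ᵀ` then `W` can be chosen symmetric, and if `M₁` is
skew-symmetric and `M₂ = −M₃ᵀ` then `W` can be chosen skew-symmetric. -/
theorem norm_bounded_completion
    (p q r s : ℕ) (L : ℝ) (hL : 0 ≤ L)
    (M₁ : Matrix (Fin p) (Fin q) ℝ) (M₂ : Matrix (Fin p) (Fin r) ℝ)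
    (M₃ : Matrix (Fin s) (Fin q) ℝ) :
    ((∃ W : Matrix (Fin s) (Fin r) ℝ,
        (L ^ 2 • (1 : Matrix (Fin q ⊕ Fin r) (Fin q ⊕ Fin r) ℝ) -
          (Matrix.fromBlocks M₁ M₂ M₃ W)ᵀ * Matrix.fromBlocks M₁ M₂ M₃ W).PosSemidef) ↔
      ((L ^ 2 • (1 : Matrix (Fin q ⊕ Fin r) (Fin q ⊕ Fin r) ℝ) -
          (Matrix.fromCols M₁ M₂)ᵀ * Matrix.fromCols M₁ M₂).PosSemidef ∧
        (L ^ 2 • (1 : Matrix (Fin q) (Fin q) ℝ) -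
          (Matrix.fromRows M₁ M₃)ᵀ * Matrix.fromRows M₁ M₃).PosSemidef)) ∧
    (∀ (p' s' : ℕ) (A : Matrix (Fin p') (Fin p') ℝ) (B : Matrix (Fin p') (Fin s') ℝ)
        (C : Matrix (Fin s') (Fin p') ℝ), Aᵀ = A → B = Cᵀ →
      (L ^ 2 • (1 : Matrix (Fin p' ⊕ Fin s') (Fin p' ⊕ Fin s') ℝ) -
          (Matrix.fromCols A B)ᵀ * Matrix.fromCols A B).PosSemidef →
      (L ^ 2 • (1 : Matrix (Fin p') (Fin p') ℝ) -
          (Matrix.fromRows A C)ᵀ * Matrix.fromRows A C).PosSemidef →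
      ∃ W : Matrix (Fin s') (Fin s') ℝ, Wᵀ = W ∧
        (L ^ 2 • (1 : Matrix (Fin p' ⊕ Fin s') (Fin p' ⊕ Fin s') ℝ) -
          (Matrix.fromBlocks A B C W)ᵀ * Matrix.fromBlocks A B C W).PosSemidef) ∧
    (∀ (p' s' : ℕ) (A : Matrix (Fin p') (Fin p') ℝ) (B : Matrix (Fin p') (Fin s') ℝ)
        (C : Matrix (Fin s') (Fin p') ℝ), Aᵀ = -A → B = -Cᵀ →
      (L ^ 2 • (1 : Matrix (Fin p' ⊕ Fin s') (Fin p' ⊕ Fin s') ℝ) -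
          (Matrix.fromCols A B)ᵀ * Matrix.fromCols A B).PosSemidef →
      (L ^ 2 • (1 : Matrix (Fin p') (Fin p') ℝ) -
          (Matrix.fromRows A C)ᵀ * Matrix.fromRows A C).PosSemidef →
      ∃ W : Matrix (Fin s') (Fin s') ℝ, Wᵀ = -W ∧
        (L ^ 2 • (1 : Matrix (Fin p' ⊕ Fin s') (Fin p' ⊕ Fin s') ℝ) -
          (Matrix.fromBlocks A B C W)ᵀ * Matrix.fromBlocks A B C W).PosSemidef) := by
  refine ⟨⟨?_, ?_⟩, ?_, ?_⟩
  · -- forward direction of iff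
    rintro ⟨W, hW⟩
    constructor
    · -- row condition
      have hsplit : (Matrix.fromBlocks M₁ M₂ M₃ W)ᵀ * Matrix.fromBlocks M₁ M₂ M₃ W
          = (fromCols M₁ M₂)ᵀ * fromCols M₁ M₂ + (fromCols M₃ W)ᵀ * fromCols M₃ W := by
        rw [← fromRows_fromCols_eq_fromBlocks, transpose_fromRows, fromCols_mul_fromRows]
      rw [hsplit] at hW
      exact psd_sub_add hW (psd_t_mul (fromCols M₃ W))
    · -- column condition
      have hblk : (Matrix.fromBlocks M₁ M₂ M₃ W)ᵀ * Matrix.fromBlocks M₁ M₂ M₃ W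
          = fromBlocks ((fromRows M₁ M₃)ᵀ * fromRows M₁ M₃)
              ((fromRows M₁ M₃)ᵀ * fromRows M₂ W)
              ((fromRows M₂ W)ᵀ * fromRows M₁ M₃)
              ((fromRows M₂ W)ᵀ * fromRows M₂ W) := by
        rw [← fromCols_fromRows_eq_fromBlocks, transpose_fromCols, fromRows_mul_fromCols]
      rw [hblk] at hW
      have h2 := hW.submatrix (Sum.inl : Fin q → Fin q ⊕ Fin r)
      have h3 : (L ^ 2 • (1 : Matrix (Fin q ⊕ Fin r) (Fin q ⊕ Fin r) ℝ) -
          fromBlocks ((fromRows M₁ M₃)ᵀ * fromRows M₁ M₃)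
              ((fromRows M₁ M₃)ᵀ * fromRows M₂ W)
              ((fromRows M₂ W)ᵀ * fromRows M₁ M₃)
              ((fromRows M₂ W)ᵀ * fromRows M₂ W)).submatrix Sum.inl Sum.inl
          = L ^ 2 • (1 : Matrix (Fin q) (Fin q) ℝ) - (fromRows M₁ M₃)ᵀ * fromRows M₁ M₃ := by
        ext i j
        simp [Matrix.submatrix_apply, Matrix.sub_apply, Matrix.smul_apply,
          Matrix.one_apply, Matrix.fromBlocks_apply₁₁, Sum.inl.injEq]
      rw [h3] at h2
      exact h2
  · -- reverse direction of iff
    rintro ⟨hrow, hcol⟩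
    have hcol2 : (L ^ 2 • (1 : Matrix (Fin q) (Fin q) ℝ) - (M₁ᵀ * M₁ + M₃ᵀ * M₃)).PosSemidef := by
      rw [show M₁ᵀ * M₁ + M₃ᵀ * M₃ = (fromRows M₁ M₃)ᵀ * fromRows M₁ M₃ by
        rw [transpose_fromRows, fromCols_mul_fromRows]]
      exact hcol
    have hS := psd_sub_add hcol2 (psd_t_mul M₃)
    have hKS' : ((L ^ 2 • (1 : Matrix (Fin q) (Fin q) ℝ) - M₁ᵀ * M₁) - M₃ᵀ * M₃).PosSemidef := by
      rw [show (L ^ 2 • (1 : Matrix (Fin q) (Fin q) ℝ) - M₁ᵀ * M₁) - M₃ᵀ * M₃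
          = L ^ 2 • (1 : Matrix (Fin q) (Fin q) ℝ) - (M₁ᵀ * M₁ + M₃ᵀ * M₃) by abel]
      exact hcol2
    have hrow2 : (L ^ 2 • (1 : Matrix (Fin p) (Fin p) ℝ) - (M₁ * M₁ᵀ + M₂ * M₂ᵀ)).PosSemidef := by
      have := transfer (sq_nonneg L) hrow
      rwa [transpose_fromCols, fromCols_mul_fromRows] at this
    have hT := psd_sub_add hrow2 (psd_mul_t M₂)
    have hKT' : ((L ^ 2 • (1 : Matrix (Fin p) (Fin p) ℝ) - M₁ * M₁ᵀ) - M₂ * M₂ᵀ).PosSemidef := by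
      rw [show (L ^ 2 • (1 : Matrix (Fin p) (Fin p) ℝ) - M₁ * M₁ᵀ) - M₂ * M₂ᵀ
          = L ^ 2 • (1 : Matrix (Fin p) (Fin p) ℝ) - (M₁ * M₁ᵀ + M₂ * M₂ᵀ) by abel]
      exact hrow2
    obtain ⟨Z, hM₃, hZ⟩ := douglas hS M₃ hKS'
    obtain ⟨Z', hM₂t, hZ'⟩ := douglas hT M₂ᵀ (by rwa [transpose_transpose])
    have hTt : hT.sqrtᵀ = hT.sqrt := by rw [← ct_eq]; exact hT.posSemidef_sqrt.1
    have hM₂ : M₂ = hT.sqrt * Z'ᵀ := by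
      have h4 := congrArg Matrix.transpose hM₂t
      rwa [transpose_transpose, transpose_mul, hTt] at h4
    have hY : ((1 : Matrix (Fin r) (Fin r) ℝ) - (Z'ᵀ)ᵀ * Z'ᵀ).PosSemidef := by
      rw [transpose_transpose]
      have h5 : ((1 : ℝ) • (1 : Matrix (Fin p) (Fin p) ℝ) - Z'ᵀ * Z').PosSemidef := by
        rw [one_smul]; exact hZ'
      have h6 := transfer zero_le_one h5
      rwa [one_smul] at h6
    exact ⟨-(Z * (M₁ᵀ * Z'ᵀ)), by rw [hM₂, hM₃]; exact key L hL M₁ Z Z'ᵀ hS hT hZ hY⟩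
  · -- symmetric case
    intro p' s' A B C hA hBC hrow hcol
    have hcol2 : (L ^ 2 • (1 : Matrix (Fin p') (Fin p') ℝ) - (Aᵀ * A + Cᵀ * C)).PosSemidef := by
      rw [show Aᵀ * A + Cᵀ * C = (fromRows A C)ᵀ * fromRows A C by
        rw [transpose_fromRows, fromCols_mul_fromRows]]
      exact hcol
    have hS := psd_sub_add hcol2 (psd_t_mul C)
    have hKS' : ((L ^ 2 • (1 : Matrix (Fin p') (Fin p') ℝ) - Aᵀ * A) - Cᵀ * C).PosSemidef := by
      rw [show (L ^ 2 • (1 : Matrix (Fin p') (Fin p') ℝ) - Aᵀ * A) - Cᵀ * C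
          = L ^ 2 • (1 : Matrix (Fin p') (Fin p') ℝ) - (Aᵀ * A + Cᵀ * C) by abel]
      exact hcol2
    obtain ⟨Z, hC, hZ⟩ := douglas hS C hKS'
    have hTW : A * Aᵀ = Aᵀ * A := by rw [hA]
    have hT : (L ^ 2 • (1 : Matrix (Fin p') (Fin p') ℝ) - A * Aᵀ).PosSemidef := by
      rw [hTW]; exact hS
    have hsqeq : hS.sqrt = hT.sqrt :=
      hS.posSemidef_sqrt.eq_sqrt_of_sq_eq hT (by rw [hS.sq_sqrt, hTW])
    have hSt : hS.sqrtᵀ = hS.sqrt := by rw [← ct_eq]; exact hS.posSemidef_sqrt.1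
    have hB : B = hT.sqrt * Zᵀ := by rw [hBC, hC, transpose_mul, hSt, hsqeq]
    have hY : ((1 : Matrix (Fin s') (Fin s') ℝ) - (Zᵀ)ᵀ * Zᵀ).PosSemidef := by
      rw [transpose_transpose]
      have h5 : ((1 : ℝ) • (1 : Matrix (Fin p') (Fin p') ℝ) - Zᵀ * Z).PosSemidef := by
        rw [one_smul]; exact hZ
      have h6 := transfer zero_le_one h5
      rwa [one_smul] at h6
    refine ⟨-(Z * (Aᵀ * Zᵀ)), ?_, ?_⟩
    · rw [transpose_neg, transpose_mul, transpose_mul, transpose_transpose,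
        transpose_transpose, hA, Matrix.mul_assoc]
    · rw [hB, hC]
      exact key L hL A Z Zᵀ hS hT hZ hY
  · -- skew case
    intro p' s' A B C hA hBC hrow hcol
    have hcol2 : (L ^ 2 • (1 : Matrix (Fin p') (Fin p') ℝ) - (Aᵀ * A + Cᵀ * C)).PosSemidef := by
      rw [show Aᵀ * A + Cᵀ * C = (fromRows A C)ᵀ * fromRows A C by
        rw [transpose_fromRows, fromCols_mul_fromRows]]
      exact hcol
    have hS := psd_sub_add hcol2 (psd_t_mul C)
    have hKS' : ((L ^ 2 • (1 : Matrix (Fin p') (Fin p') ℝ) - Aᵀ * A) - Cᵀ * C).PosSemidef := by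
      rw [show (L ^ 2 • (1 : Matrix (Fin p') (Fin p') ℝ) - Aᵀ * A) - Cᵀ * C
          = L ^ 2 • (1 : Matrix (Fin p') (Fin p') ℝ) - (Aᵀ * A + Cᵀ * C) by abel]
      exact hcol2
    obtain ⟨Z, hC, hZ⟩ := douglas hS C hKS'
    have hTW : A * Aᵀ = Aᵀ * A := by rw [hA, Matrix.mul_neg, Matrix.neg_mul]
    have hT : (L ^ 2 • (1 : Matrix (Fin p') (Fin p') ℝ) - A * Aᵀ).PosSemidef := by
      rw [hTW]; exact hS
    have hsqeq : hS.sqrt = hT.sqrt :=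
      hS.posSemidef_sqrt.eq_sqrt_of_sq_eq hT (by rw [hS.sq_sqrt, hTW])
    have hSt : hS.sqrtᵀ = hS.sqrt := by rw [← ct_eq]; exact hS.posSemidef_sqrt.1
    have hB : B = hT.sqrt * (-Zᵀ) := by
      rw [hBC, hC, transpose_mul, hSt, hsqeq, ← Matrix.mul_neg]
    have hY : ((1 : Matrix (Fin s') (Fin s') ℝ) - (-Zᵀ)ᵀ * (-Zᵀ)).PosSemidef := by
      rw [transpose_neg, transpose_transpose, Matrix.neg_mul, Matrix.mul_neg, neg_neg]
      have h5 : ((1 : ℝ) • (1 : Matrix (Fin p') (Fin p') ℝ) - Zᵀ * Z).PosSemidef := by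
        rw [one_smul]; exact hZ
      have h6 := transfer zero_le_one h5
      rwa [one_smul] at h6
    refine ⟨-(Z * (Aᵀ * -Zᵀ)), ?_, ?_⟩
    · have hA' : A = -Aᵀ := by rw [hA, neg_neg]
      rw [transpose_neg, transpose_mul, transpose_mul, transpose_neg, transpose_transpose,
        transpose_transpose]
      simp [hA, Matrix.mul_neg, Matrix.neg_mul, Matrix.mul_assoc]
    · rw [hB, hC]
      exact key L hL A Z (-Zᵀ) hS hT hZ hY
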